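/- The 1-form α_n = -dx - Σ_{0 ≤ i < j ≤ n} l_i dl_j on 𝕋 × Δⁿ is invariant under the cyclic gauge transformation T(τₙ)(x | l₀,...,l_n) = (x - S₁(l) mod 1 | l_n, l₀, ..., l_{n-1}) where S₁(l) = l₀: i.e., the pullback of α_n under the map (x, l) ↦ (x - Σ_{a<1} l_a, |τₙ|(l))—more generally under T(τₙⁱ)(x|l) = (x - Σ_{a=0}^{i-1} l_a | l cyclically shifted by i)—equals α_n. -/

import Mathlib

/-- The connection 1-form `α_n = -dx - Σ_{i<j} l_i dl_j` on `𝕋 × Δⁿ`, evaluated at the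
point with barycentric coordinates `l` on a tangent vector with fiber component `ξ`
and base component `u` (a sum-zero vector, `dl_i` reading the `i`-th coordinate). -/
def alphaVal (n : ℕ) (l : Fin (n + 1) → ℝ) (ξ : ℝ) (u : Fin (n + 1) → ℝ) : ℝ :=
  -ξ - ∑ p ∈ Finset.univ.filter (fun p : Fin (n + 1) × Fin (n + 1) => p.1 < p.2),
    l p.1 * u p.2

open Finset in
/-- Pair-filter sums as iterated sums. -/
lemma pair_sum (n : ℕ) (f : Fin (n+1) → Fin (n+1) → ℝ) :
    ∑ p ∈ univ.filter (fun p : Fin (n+1) × Fin (n+1) => p.1 < p.2), f p.1 p.2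
    = ∑ q : Fin (n+1), ∑ p : Fin (n+1), if p < q then f p q else 0 := by
  rw [Finset.sum_filter, ← Finset.univ_product_univ, Finset.sum_product]
  exact Finset.sum_comm

open Finset in
/-- The single-step shift identity: `F(l∘(+1), u∘(+1)) = F(l,u) + u 0` where
`F(l,u) = Σ_{p<q} l_p u_q`, assuming `Σ l = 1` and `Σ u = 0`. -/
lemma Fstep (n : ℕ) (l u : Fin (n+1) → ℝ) (hl : ∑ a, l a = 1) (hu : ∑ a, u a = 0) :
    (∑ p ∈ univ.filter (fun p : Fin (n+1) × Fin (n+1) => p.1 < p.2), l (p.1+1) * u (p.2+1))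
    = (∑ p ∈ univ.filter (fun p : Fin (n+1) × Fin (n+1) => p.1 < p.2), l p.1 * u p.2) + u 0 := by
  rw [pair_sum n (fun p q => l (p+1) * u (q+1)), pair_sum n (fun p q => l p * u q)]
  have hR : ∑ q : Fin (n+1), ∑ p : Fin (n+1), (if p < q then l p * u q else 0)
      = (∑ q : Fin n, ∑ p : Fin n, if p < q then l p.succ * u q.succ else 0) - l 0 * u 0 := by
    rw [Fin.sum_univ_succ]
    simp only [Fin.not_lt_zero, if_false, Finset.sum_const_zero, zero_add]
    have : ∀ q : Fin n, ∑ p : Fin (n+1), (if p < q.succ then l p * u q.succ else 0)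
        = l 0 * u q.succ + ∑ p : Fin n, (if p < q then l p.succ * u q.succ else 0) := by
      intro q
      rw [Fin.sum_univ_succ]
      simp [Fin.succ_lt_succ_iff, Fin.succ_pos]
    rw [Finset.sum_congr rfl (fun q _ => this q), Finset.sum_add_distrib, ← Finset.mul_sum]
    have : ∑ q : Fin n, u q.succ = -u 0 := by
      have := Fin.sum_univ_succ u
      rw [hu] at this; linarith
    rw [this]; ring
  have hL : ∑ q : Fin (n+1), ∑ p : Fin (n+1), (if p < q then l (p+1) * u (q+1) else 0)
      = (∑ q : Fin n, ∑ p : Fin n, if p < q then l p.succ * u q.succ else 0)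
        + (1 - l 0) * u 0 := by
    rw [Fin.sum_univ_castSucc]
    have h1 : ∀ q : Fin n, ∑ p : Fin (n+1), (if p < q.castSucc then l (p+1) * u (q.castSucc+1) else 0)
        = ∑ p : Fin n, (if p < q then l p.succ * u q.succ else 0) := by
      intro q
      rw [Fin.sum_univ_castSucc]
      have : ¬ (Fin.last n < q.castSucc) := by
        simp [Fin.lt_iff_val_lt_val, Fin.le_last, Nat.not_lt.mpr (Nat.le_of_lt_succ q.castSucc.isLt)]
      rw [if_neg this, add_zero]
      refine Finset.sum_congr rfl fun p _ => ?_
      simp [Fin.castSucc_lt_castSucc_iff, Fin.coeSucc_eq_succ]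
    have h2 : ∑ p : Fin (n+1), (if p < Fin.last n then l (p+1) * u ((Fin.last n)+1) else 0)
        = (1 - l 0) * u 0 := by
      rw [Fin.last_add_one, Fin.sum_univ_castSucc]
      simp only [Fin.castSucc_lt_last, if_true, lt_self_iff_false, if_false, add_zero,
        Fin.coeSucc_eq_succ]
      rw [← Finset.sum_mul]
      have : ∑ p : Fin n, l p.succ = 1 - l 0 := by
        have := Fin.sum_univ_succ l
        rw [hl] at this; linarith
      rw [this]
    rw [Finset.sum_congr rfl (fun q _ => h1 q), h2]
  rw [hL, hR]; ring

/-- Sums are invariant under cyclic shifts of the index. -/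
lemma shift_sum (n : ℕ) (l : Fin (n+1) → ℝ) (c : Fin (n+1)) :
    ∑ j, l (j + c) = ∑ j, l j :=
  Equiv.sum_comp (Equiv.addRight c) l

open Fin.NatCast

/-- Invariance of `α_n` under the cyclic gauge transformation `T(τₙⁱ)`: the map sending
`(x | l)` to `(x - Σ_{a<i} l_a | l cyclically shifted by i)` (so the section through
`Σ_{a<i} l_a` becomes the zero section and the new `j`-th barycentric coordinate is
`l_{j+i}`).  Its differential sends the tangent vector `(ξ, u)` at `(x,l)` to
`(ξ - Σ_{a<i} u_a, u shifted)`, and the pullback of `α_n` equals `α_n`. -/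
theorem alpha_cyclic_invariant (n : ℕ) (i : ℕ) (hi : i ≤ n)
    (l u : Fin (n + 1) → ℝ) (hl : ∑ a, l a = 1) (hu : ∑ a, u a = 0) (ξ : ℝ) :
    alphaVal n (fun j => l (j + (i : Fin (n + 1))))
        (ξ - ∑ a ∈ Finset.range i, u ((a : ℕ) : Fin (n + 1)))
        (fun j => u (j + (i : Fin (n + 1))))
      = alphaVal n l ξ u := by
  clear hi
  induction i with
  | zero => simp [alphaVal]
  | succ i ih =>
    set c : Fin (n+1) := (i : Fin (n+1)) with hc
    have hcast : ((i+1 : ℕ) : Fin (n+1)) = c + 1 := by push_cast; rfl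
    have hshift : ∀ j : Fin (n+1), j + ((i+1 : ℕ) : Fin (n+1)) = (j + 1) + c := by
      intro j; rw [hcast, add_assoc, add_comm (1 : Fin (n+1)) c]
    have hl' : ∑ a, l (a + c) = 1 := by rw [shift_sum]; exact hl
    have hu' : ∑ a, u (a + c) = 0 := by rw [shift_sum]; exact hu
    have key := Fstep n (fun j => l (j + c)) (fun j => u (j + c)) hl' hu'
    simp only [hshift]
    rw [Finset.sum_range_succ]
    unfold alphaVal
    simp only [zero_add] at key
    rw [key]
    have ihe := ih
    unfold alphaVal at ihe
    linarith [ihe]
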